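/- arXiv:2111.00691 — 3 statements merged into one kernel-verified Lean document; each statement's English description precedes it below -/
import Mathlib

section
/- Let d ≥ 1 and K ≥ 0 be integers, let N be a d×d real matrix, let w ∈ ℝ^d be a row vector, and let v ∈ ℝ^d be a column vector whose entries satisfy |v_j| ≤ 1 for every j. Define c_K(k) := (−1)^k · binom(K+1, k+1). Then |wᵀ v − Σ_{k=1}^{K+1} c_K(k−1) · wᵀ N^k v| ≤ (Σ_i |w_i|) · ‖I − N‖_∞^{K+1}, where ‖M‖_∞ denotes the matrix ∞-norm (the maximum over rows of the sum of absolute values of the entries in that row). (This is the gate-error-mitigation bound of Theorem 1, with w the Pauli-transfer-matrix row vector of the observable O, v the Pauli-transfer-matrix column vector of the state ρ, and N the Pauli transfer matrix of the noise channel.) -/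
open Matrix

/-- The matrix ∞-norm: the maximum over rows of the sum of absolute values of the
entries in that row. -/
noncomputable def matrixInfNorm {d : ℕ} (M : Matrix (Fin d) (Fin d) ℝ) : ℝ :=
  ⨆ i, ∑ j, |M i j|

lemma rowsum_le {d : ℕ} (M : Matrix (Fin d) (Fin d) ℝ) (i : Fin d) :
    ∑ j, |M i j| ≤ matrixInfNorm M := by
  exact le_ciSup (f := fun i => ∑ j, |M i j|) (Set.Finite.bddAbove (Set.finite_range _)) i

lemma infNorm_nonneg {d : ℕ} (hd : 1 ≤ d) (M : Matrix (Fin d) (Fin d) ℝ) :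
    0 ≤ matrixInfNorm M := by
  have : Nonempty (Fin d) := ⟨⟨0, hd⟩⟩
  exact le_trans (Finset.sum_nonneg fun j _ => abs_nonneg _) (rowsum_le M this.some)

lemma infNorm_mul {d : ℕ} (hd : 1 ≤ d) (A B : Matrix (Fin d) (Fin d) ℝ) :
    matrixInfNorm (A * B) ≤ matrixInfNorm A * matrixInfNorm B := by
  have : Nonempty (Fin d) := ⟨⟨0, hd⟩⟩
  apply ciSup_le
  intro i
  calc ∑ j, |(A * B) i j| ≤ ∑ j, ∑ l, |A i l * B l j| := by
        apply Finset.sum_le_sum; intro j _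
        simpa [Matrix.mul_apply] using Finset.abs_sum_le_sum_abs (fun l => A i l * B l j) _
    _ = ∑ l, |A i l| * ∑ j, |B l j| := by
        rw [Finset.sum_comm]
        simp [abs_mul, Finset.mul_sum]
    _ ≤ ∑ l, |A i l| * matrixInfNorm B := by
        apply Finset.sum_le_sum; intro l _
        exact mul_le_mul_of_nonneg_left (rowsum_le B l) (abs_nonneg _)
    _ = (∑ l, |A i l|) * matrixInfNorm B := by rw [Finset.sum_mul]
    _ ≤ matrixInfNorm A * matrixInfNorm B :=
        mul_le_mul_of_nonneg_right (rowsum_le A i) (infNorm_nonneg hd B)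

lemma infNorm_pow {d : ℕ} (hd : 1 ≤ d) (M : Matrix (Fin d) (Fin d) ℝ) (n : ℕ) (hn : 1 ≤ n) :
    matrixInfNorm (M ^ n) ≤ matrixInfNorm M ^ n := by
  induction n, hn using Nat.le_induction with
  | base => simp
  | succ n hn ih =>
      calc matrixInfNorm (M ^ (n+1)) = matrixInfNorm (M ^ n * M) := by rw [pow_succ]
        _ ≤ matrixInfNorm (M ^ n) * matrixInfNorm M := infNorm_mul hd _ _
        _ ≤ matrixInfNorm M ^ n * matrixInfNorm M :=
            mul_le_mul_of_nonneg_right ih (infNorm_nonneg hd M)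
        _ = matrixInfNorm M ^ (n+1) := (pow_succ _ _).symm

lemma dot_sum_mulVec {d : ℕ} {ι : Type*} (s : Finset ι) (A : ι → Matrix (Fin d) (Fin d) ℝ)
    (w v : Fin d → ℝ) :
    w ⬝ᵥ (∑ k ∈ s, A k).mulVec v = ∑ k ∈ s, w ⬝ᵥ (A k).mulVec v := by
  induction s using Finset.cons_induction with
  | empty => simp [Matrix.mulVec]
  | cons a s ha ih => simp [Finset.sum_cons, Matrix.add_mulVec, dotProduct_add, ih]

lemma dot_bound {d : ℕ} (M : Matrix (Fin d) (Fin d) ℝ) (w v : Fin d → ℝ)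
    (hv : ∀ j, |v j| ≤ 1) :
    |w ⬝ᵥ M.mulVec v| ≤ (∑ i, |w i|) * matrixInfNorm M := by
  calc |w ⬝ᵥ M.mulVec v| ≤ ∑ i, |w i * M.mulVec v i| :=
        Finset.abs_sum_le_sum_abs _ _
    _ ≤ ∑ i, |w i| * matrixInfNorm M := by
        apply Finset.sum_le_sum; intro i _
        rw [abs_mul]
        apply mul_le_mul_of_nonneg_left _ (abs_nonneg _)
        calc |M.mulVec v i| ≤ ∑ j, |M i j * v j| := by
              simpa [Matrix.mulVec, dotProduct] using
                Finset.abs_sum_le_sum_abs (fun j => M i j * v j) _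
          _ ≤ ∑ j, |M i j| := by
              apply Finset.sum_le_sum; intro j _
              rw [abs_mul]
              exact mul_le_of_le_one_right (abs_nonneg _) (hv j)
          _ ≤ matrixInfNorm M := rowsum_le M i
    _ = (∑ i, |w i|) * matrixInfNorm M := by rw [Finset.sum_mul]

/-- Theorem 1 (gate error mitigation bound): for a row vector `w`, a matrix `N` and a
column vector `v` with `|v j| ≤ 1` for all `j`, with coefficients
`c_K(k) = (-1)^k * binom(K+1, k+1)`,
`|wᵀv - ∑_{k=1}^{K+1} c_K(k-1) wᵀ N^k v| ≤ (∑_i |w i|) * ‖I - N‖_∞^{K+1}`. -/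
theorem gate_error_mitigation (d K : ℕ) (hd : 1 ≤ d)
    (N : Matrix (Fin d) (Fin d) ℝ) (w v : Fin d → ℝ) (hv : ∀ j, |v j| ≤ 1) :
    |(w ⬝ᵥ v) - ∑ k ∈ Finset.Icc 1 (K + 1),
        ((-1 : ℝ) ^ (k - 1) * ((K + 1).choose k : ℝ)) * (w ⬝ᵥ (N ^ k).mulVec v)|
      ≤ (∑ i, |w i|) * matrixInfNorm (1 - N) ^ (K + 1) := by
  have expand : ((1 - N) ^ (K + 1) : Matrix (Fin d) (Fin d) ℝ)
      = ∑ k ∈ Finset.range (K + 2), ((-1 : ℝ) ^ k * ((K + 1).choose k : ℝ)) • N ^ k := by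
    have h1 : (1 - N : Matrix (Fin d) (Fin d) ℝ) = -N + 1 := by rw [sub_eq_add_neg, add_comm]
    rw [h1, (Commute.one_right (-N)).add_pow]
    apply Finset.sum_congr rfl
    intro k _
    have : (-N : Matrix (Fin d) (Fin d) ℝ) ^ k = (-1 : ℝ) ^ k • N ^ k := by
      rw [show (-N : Matrix (Fin d) (Fin d) ℝ) = (-1 : ℝ) • N by simp, smul_pow]
    rw [this, one_pow, mul_one, smul_mul_assoc]
    rw [show (((K + 1).choose k : ℕ) : Matrix (Fin d) (Fin d) ℝ)
        = (((K + 1).choose k : ℝ)) • (1 : Matrix (Fin d) (Fin d) ℝ) by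
      simp [Nat.cast_smul_eq_nsmul]]
    rw [Matrix.mul_smul, mul_one, smul_smul]
  have key : w ⬝ᵥ ((1 - N) ^ (K + 1)).mulVec v
      = (w ⬝ᵥ v) - ∑ k ∈ Finset.Icc 1 (K + 1),
        ((-1 : ℝ) ^ (k - 1) * ((K + 1).choose k : ℝ)) * (w ⬝ᵥ (N ^ k).mulVec v) := by
    rw [expand, dot_sum_mulVec]
    simp only [Matrix.smul_mulVec, dotProduct_smul, smul_eq_mul]
    rw [Finset.sum_range_succ']
    simp only [pow_zero, Nat.choose_zero_right, Nat.cast_one, one_mul, Matrix.one_mulVec]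
    rw [show Finset.Icc 1 (K + 1) = Finset.Ico 1 (K + 2) by
      exact (Finset.Ico_add_one_right_eq_Icc 1 (K + 1)).symm, Finset.sum_Ico_eq_sum_range]
    simp only [Nat.add_sub_cancel, show K + 2 - 1 = K + 1 from rfl]
    have hs : ∑ i ∈ Finset.range (K + 1),
        (-1 : ℝ) ^ (i + 1) * ((K + 1).choose (i + 1) : ℝ) * (w ⬝ᵥ (N ^ (i + 1)).mulVec v)
        = - ∑ i ∈ Finset.range (K + 1),
        (-1 : ℝ) ^ (1 + i - 1) * ((K + 1).choose (1 + i) : ℝ) * (w ⬝ᵥ (N ^ (1 + i)).mulVec v) := by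
      rw [← Finset.sum_neg_distrib]
      apply Finset.sum_congr rfl
      intro i _
      have h2 : 1 + i - 1 = i := by omega
      rw [h2, add_comm 1 i, pow_succ]
      ring
    rw [hs]
    ring
  rw [← key]
  calc |w ⬝ᵥ ((1 - N) ^ (K + 1)).mulVec v|
      ≤ (∑ i, |w i|) * matrixInfNorm ((1 - N) ^ (K + 1)) := dot_bound _ w v hv
    _ ≤ (∑ i, |w i|) * matrixInfNorm (1 - N) ^ (K + 1) :=
        mul_le_mul_of_nonneg_left (infNorm_pow hd _ _ (Nat.le_add_left 1 K))
          (Finset.sum_nonneg fun i _ => abs_nonneg _)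
end

section
/- Let d ≥ 1 and K ≥ 0 be integers. Let A be a d×d column-stochastic real matrix (all entries nonnegative and every column sums to 1), let v ∈ ℝ^d have nonnegative entries summing to 1, and let O : {1,…,d} → ℝ satisfy |O(x)| ≤ 1 for all x. Define ξ_m := 2(1 − min_x A_{xx}) and c_K(k) := (−1)^k · binom(K+1, k+1). Then |Σ_x O(x) v_x − Σ_{k=1}^{K+1} c_K(k−1) · Σ_x O(x) (A^k v)_x| ≤ ξ_m^{K+1}. (This is the measurement-error-mitigation bound of Theorem 2, with A the measurement error matrix, v the vector of diagonal entries of the state ρ, and O the diagonal observable.) -/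
open Finset

lemma matrix_sub_pow_expand (d n : ℕ) (A : Matrix (Fin d) (Fin d) ℝ) :
    (1 - A)^n = ∑ m ∈ range (n+1), ((-1:ℝ)^m * (n.choose m : ℝ)) • A^m := by
  have h := Commute.add_pow (Commute.one_right (-A)) n
  rw [neg_add_eq_sub] at h
  rw [h]
  apply Finset.sum_congr rfl
  intro m _
  have h2 : (-A)^m * (1:Matrix (Fin d) (Fin d) ℝ)^(n-m)
      * ((n.choose m : ℕ) : Matrix (Fin d) (Fin d) ℝ) = ((n.choose m : ℝ)) • (-A)^m := by
    rw [one_pow, mul_one, ← nsmul_eq_mul', Nat.cast_smul_eq_nsmul]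
  rw [h2, show -A = (-1:ℝ) • A from by simp, smul_pow, smul_smul, mul_comm]

lemma mulVec_sub_pow_expand (d n : ℕ) (A : Matrix (Fin d) (Fin d) ℝ) (v : Fin d → ℝ)
    (x : Fin d) :
    ((1 - A)^n).mulVec v x
      = ∑ m ∈ range (n+1), ((-1:ℝ)^m * (n.choose m : ℝ)) * (A^m).mulVec v x := by
  rw [matrix_sub_pow_expand]
  simp [Matrix.mulVec, dotProduct, Matrix.sum_apply, Finset.sum_mul,
    Matrix.smul_apply, smul_eq_mul, Finset.mul_sum]
  rw [Finset.sum_comm]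
  exact Finset.sum_congr rfl fun a _ => Finset.sum_congr rfl fun b _ => by ring

/-- Theorem 2 (measurement error mitigation bound): for a column-stochastic error
matrix `A`, a probability vector `v`, and a diagonal observable `O` with entries of
absolute value at most 1, with noise resistance `ξ_m = 2(1 - min_x A_{xx})` and
coefficients `c_K(k) = (-1)^k * binom(K+1, k+1)`,
`|∑_x O(x) v_x - ∑_{k=1}^{K+1} c_K(k-1) ∑_x O(x) (A^k v)_x| ≤ ξ_m^{K+1}`. -/
theorem measurement_error_mitigation (d K : ℕ) (hd : 1 ≤ d)
    (A : Matrix (Fin d) (Fin d) ℝ)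
    (hA_nonneg : ∀ i j, 0 ≤ A i j) (hA_col : ∀ j, ∑ i, A i j = 1)
    (v : Fin d → ℝ) (hv_nonneg : ∀ i, 0 ≤ v i) (hv_sum : ∑ i, v i = 1)
    (O : Fin d → ℝ) (hO : ∀ x, |O x| ≤ 1) :
    |(∑ x, O x * v x) - ∑ k ∈ Finset.Icc 1 (K + 1),
        ((-1 : ℝ) ^ (k - 1) * ((K + 1).choose k : ℝ)) * ∑ x, O x * (A ^ k).mulVec v x|
      ≤ (2 * (1 - ⨅ x, A x x)) ^ (K + 1) := by
  have hne : Nonempty (Fin d) := ⟨⟨0, hd⟩⟩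
  set ξ : ℝ := 2 * (1 - ⨅ x, A x x) with hξdef
  have hbdd : BddBelow (Set.range fun x => A x x) := (Set.finite_range _).bddBelow
  have hinf_le : ∀ j, (⨅ x, A x x) ≤ A j j := fun j => ciInf_le hbdd j
  have hdiag_le : ∀ j : Fin d, A j j ≤ 1 := fun j => by
    rw [← hA_col j]
    exact Finset.single_le_sum (fun i _ => hA_nonneg i j) (Finset.mem_univ j)
  have hξ0 : 0 ≤ ξ := by
    have h1 := (hinf_le ⟨0, hd⟩).trans (hdiag_le ⟨0, hd⟩)
    rw [hξdef]; linarith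
  -- column sums of |1 - A| are at most ξ
  have hcol : ∀ j, ∑ i, |(1 - A) i j| ≤ ξ := by
    intro j
    have hrow : ∀ i, |(1 - A) i j| = (if i = j then 1 - 2 * A j j else 0) + A i j := by
      intro i
      by_cases hij : i = j
      · subst hij
        simp only [Matrix.sub_apply, Matrix.one_apply_eq, if_true]
        rw [abs_of_nonneg (by linarith [hdiag_le i])]
        ring
      · simp only [Matrix.sub_apply, Matrix.one_apply_ne hij, hij, if_false, zero_add,
          zero_sub, abs_neg]
        exact abs_of_nonneg (hA_nonneg i j)
    calc ∑ i, |(1 - A) i j|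
        = ∑ i, ((if i = j then 1 - 2 * A j j else 0) + A i j) := by
          exact Finset.sum_congr rfl fun i _ => hrow i
      _ = (1 - 2 * A j j) + 1 := by
          rw [Finset.sum_add_distrib, hA_col j, Finset.sum_ite_eq' _ j]
          simp
      _ = 2 * (1 - A j j) := by ring
      _ ≤ ξ := by have := hinf_le j; rw [hξdef]; linarith
  -- contraction in ℓ¹ norm
  have hcontr : ∀ w : Fin d → ℝ, ∑ i, |(1 - A).mulVec w i| ≤ ξ * ∑ i, |w i| := by
    intro w
    calc ∑ i, |(1 - A).mulVec w i|
        ≤ ∑ i, ∑ j, |(1 - A) i j| * |w j| := by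
          apply Finset.sum_le_sum; intro i _
          rw [Matrix.mulVec, dotProduct]
          refine (Finset.abs_sum_le_sum_abs _ _).trans ?_
          exact Finset.sum_le_sum fun j _ => le_of_eq (abs_mul _ _)
      _ = ∑ j, (∑ i, |(1 - A) i j|) * |w j| := by
          rw [Finset.sum_comm]
          exact Finset.sum_congr rfl fun j _ => (Finset.sum_mul _ _ _).symm
      _ ≤ ∑ j, ξ * |w j| :=
          Finset.sum_le_sum fun j _ => mul_le_mul_of_nonneg_right (hcol j) (abs_nonneg _)
      _ = ξ * ∑ j, |w j| := (Finset.mul_sum _ _ _).symm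
  -- iterate
  have hpow : ∀ n : ℕ, ∑ i, |((1 - A)^n).mulVec v i| ≤ ξ ^ n := by
    intro n
    induction n with
    | zero =>
        simp only [pow_zero, Matrix.one_mulVec]
        have hv1 : ∑ i, |v i| = 1 := by
          rw [← hv_sum]
          exact Finset.sum_congr rfl fun i _ => abs_of_nonneg (hv_nonneg i)
        exact hv1.le
    | succ n ih =>
        have hsplit : ((1 - A)^(n+1)).mulVec v = (1 - A).mulVec (((1 - A)^n).mulVec v) := by
          rw [Matrix.mulVec_mulVec, ← pow_succ']
        rw [hsplit, pow_succ']
        calc ∑ i, |(1 - A).mulVec (((1 - A)^n).mulVec v) i|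
            ≤ ξ * ∑ i, |((1 - A)^n).mulVec v i| := hcontr _
          _ ≤ ξ * ξ ^ n := mul_le_mul_of_nonneg_left ih hξ0
  -- the key algebraic identity
  have hkey : (∑ x, O x * v x) - ∑ k ∈ Finset.Icc 1 (K + 1),
        ((-1 : ℝ) ^ (k - 1) * ((K + 1).choose k : ℝ)) * ∑ x, O x * (A ^ k).mulVec v x
      = ∑ x, O x * ((1 - A)^(K+1)).mulVec v x := by
    have e1 : ∑ x, O x * ((1 - A)^(K+1)).mulVec v x
        = ∑ m ∈ range (K+2), ((-1:ℝ)^m * ((K+1).choose m : ℝ))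
            * ∑ x, O x * (A^m).mulVec v x := by
      calc ∑ x, O x * ((1 - A)^(K+1)).mulVec v x
          = ∑ x, ∑ m ∈ range (K+2),
              O x * (((-1:ℝ)^m * ((K+1).choose m : ℝ)) * (A^m).mulVec v x) := by
            refine Finset.sum_congr rfl fun x _ => ?_
            rw [mulVec_sub_pow_expand, Finset.mul_sum]
        _ = ∑ m ∈ range (K+2), ∑ x,
              O x * (((-1:ℝ)^m * ((K+1).choose m : ℝ)) * (A^m).mulVec v x) :=
            Finset.sum_comm
        _ = ∑ m ∈ range (K+2), ((-1:ℝ)^m * ((K+1).choose m : ℝ))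
              * ∑ x, O x * (A^m).mulVec v x := by
            refine Finset.sum_congr rfl fun m _ => ?_
            rw [Finset.mul_sum]
            exact Finset.sum_congr rfl fun x _ => by ring
    rw [e1, Finset.sum_range_succ']
    have e0 : ((-1:ℝ)^0 * ((K+1).choose 0 : ℝ)) * ∑ x, O x * (A^0).mulVec v x
        = ∑ x, O x * v x := by
      simp [Matrix.one_mulVec]
    rw [e0]
    have e2 : ∑ k ∈ Finset.Icc 1 (K + 1),
          ((-1 : ℝ) ^ (k - 1) * ((K + 1).choose k : ℝ)) * ∑ x, O x * (A ^ k).mulVec v x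
        = ∑ i ∈ range (K+1),
          ((-1 : ℝ) ^ i * ((K + 1).choose (i+1) : ℝ)) * ∑ x, O x * (A ^ (i+1)).mulVec v x := by
      rw [← Finset.Ico_add_one_right_eq_Icc, Finset.sum_Ico_eq_sum_range]
      have hr : K + 1 + 1 - 1 = K + 1 := by omega
      rw [hr]
      refine Finset.sum_congr rfl fun i _ => ?_
      rw [show 1 + i - 1 = i from by omega, show 1 + i = i + 1 from by omega]
    rw [e2]
    have e3 : ∀ i ∈ range (K+1),
        ((-1:ℝ)^(i+1) * ((K+1).choose (i+1) : ℝ)) * ∑ x, O x * (A^(i+1)).mulVec v x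
        = -(((-1 : ℝ) ^ i * ((K + 1).choose (i+1) : ℝ)) * ∑ x, O x * (A ^ (i+1)).mulVec v x) := by
      intro i _
      rw [pow_succ]
      ring
    rw [Finset.sum_congr rfl e3, Finset.sum_neg_distrib]
    ring
  rw [hkey]
  -- final bound
  calc |∑ x, O x * ((1 - A)^(K+1)).mulVec v x|
      ≤ ∑ x, |O x * ((1 - A)^(K+1)).mulVec v x| := Finset.abs_sum_le_sum_abs _ _
    _ ≤ ∑ x, |((1 - A)^(K+1)).mulVec v x| := by
        refine Finset.sum_le_sum fun x _ => ?_
        rw [abs_mul]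
        exact mul_le_of_le_one_left (abs_nonneg _) (hO x)
    _ ≤ ξ ^ (K+1) := hpow (K+1)
end

section
/- For every γ ∈ [0,1], let T be the 4×4 real matrix with rows (1,0,0,0), (0,√(1−γ),0,0), (0,0,√(1−γ),0), (γ,0,0,1−γ) (the Pauli transfer matrix of the qubit amplitude damping channel 𝒜_γ). Then ‖I − T‖_∞ = 2γ, where ‖M‖_∞ := max_i Σ_j |M_{ij}| is the maximum absolute row sum. Hence the noise resistance of the amplitude damping channel is ξ_g(𝒜_γ) = 2γ. -/
/-- The noise resistance of the qubit amplitude damping channel: its Pauli transfer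
matrix `T` has rows `(1,0,0,0), (0,√(1-γ),0,0), (0,0,√(1-γ),0), (γ,0,0,1-γ)`, and
`‖I - T‖_∞ = 2γ`. -/
theorem amplitude_damping_noise_resistance (γ : ℝ) (hγ : γ ∈ Set.Icc (0 : ℝ) 1) :
    matrixInfNorm
      ((1 : Matrix (Fin 4) (Fin 4) ℝ) - Matrix.of
        ![![1, 0, 0, 0],
          ![0, Real.sqrt (1 - γ), 0, 0],
          ![0, 0, Real.sqrt (1 - γ), 0],
          ![γ, 0, 0, 1 - γ]])
      = 2 * γ := by
  obtain ⟨h0, h1⟩ := hγ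
  have hnn : (0 : ℝ) ≤ 1 - γ := by linarith
  have hs0 : (0 : ℝ) ≤ Real.sqrt (1 - γ) := Real.sqrt_nonneg _
  have hs1 : Real.sqrt (1 - γ) ≤ 1 := by
    exact Real.sqrt_le_one.mpr (by linarith)
  have hsq : 1 - γ ≤ Real.sqrt (1 - γ) := by
    nlinarith [Real.sq_sqrt hnn]
  unfold matrixInfNorm
  apply le_antisymm
  · apply ciSup_le
    intro i
    fin_cases i <;>
      simp [Matrix.sub_apply, Matrix.one_apply, Fin.sum_univ_four, abs_of_nonneg h0,
        abs_of_nonneg (show (0:ℝ) ≤ 1 - Real.sqrt (1 - γ) by linarith)] <;> linarith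
  · have h := le_ciSup (f := fun i =>
      ∑ j, |((1 : Matrix (Fin 4) (Fin 4) ℝ) - Matrix.of
        ![![1, 0, 0, 0],
          ![0, Real.sqrt (1 - γ), 0, 0],
          ![0, 0, Real.sqrt (1 - γ), 0],
          ![γ, 0, 0, 1 - γ]]) i j|)
      (Set.Finite.bddAbove (Set.finite_range _)) (3 : Fin 4)
    refine le_trans ?_ h
    simp [Matrix.sub_apply, Matrix.one_apply, Fin.sum_univ_four,
      abs_of_nonneg h0]
    linarith
end
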